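/- Let Δ be a simplicial complex on [n]. Then GCut(Δ) is full-dimensional in its ambient space: the affine span of the points {d^S : S ⊆ [n]} is all of ℝ^Δ̄. Consequently, the dimension of GCut(Δ) equals the number of nonempty faces of Δ. -/

import Mathlib

open Finset

/-- The index type of the nonempty faces of a simplicial complex `Δ` on `[n]`. -/
abbrev FaceIdx {n : ℕ} (Δ : Finset (Finset (Fin n))) : Type :=
  {F : Finset (Fin n) // F ∈ Δ ∧ F.Nonempty}

/-- The vertex `d^S` of the generalized cut polytope. -/
noncomputable def dvec {n : ℕ} (Δ : Finset (Finset (Fin n))) (S : Finset (Fin n)) :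
    FaceIdx Δ → ℝ :=
  fun F => if Odd ((F.val ∩ S).card) then 1 else 0

lemma gcut_sumB {n : ℕ} (F G : Finset (Fin n)) :
    ∑ S ∈ F.powerset, ((-1:ℝ))^S.card * (-1)^((G ∩ S).card)
      = if F ⊆ G then (2:ℝ)^F.card else 0 := by
  have step : ∀ S ∈ F.powerset,
      ((-1:ℝ))^S.card * (-1)^((G ∩ S).card) = ∏ i ∈ S, (if i ∈ G then (1:ℝ) else -1) := by
    intro S _
    rw [Finset.prod_ite, Finset.prod_const, Finset.prod_const, one_pow, one_mul,
      ← Finset.sdiff_eq_filter]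
    have hcard : S.card = (S \ G).card + (S ∩ G).card := (Finset.card_sdiff_add_card_inter S G).symm
    have hGS : (G ∩ S).card = (S ∩ G).card := by rw [Finset.inter_comm]
    rw [hGS, hcard, pow_add, mul_assoc, ← pow_add, ← two_mul, pow_mul]
    norm_num
  rw [Finset.sum_congr rfl step]
  have := Finset.prod_add (fun i => if i ∈ G then (1:ℝ) else -1) (fun _ => (1:ℝ)) F
  simp only [Finset.prod_const_one, mul_one] at this
  rw [← this]
  by_cases hFG : F ⊆ G
  · rw [if_pos hFG]
    rw [Finset.prod_congr rfl (fun i hi => by rw [if_pos (hFG hi)])]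
    rw [Finset.prod_const]; norm_num
  · rw [if_neg hFG]
    obtain ⟨i, hiF, hiG⟩ := Finset.not_subset.mp hFG
    exact Finset.prod_eq_zero hiF (by rw [if_neg hiG]; ring)

lemma gcut_L1 {n : ℕ} (F G : Finset (Fin n)) (hF : F.Nonempty) :
    ∑ S ∈ F.powerset, ((-1:ℝ))^S.card * (if Odd ((G ∩ S).card) then (1:ℝ) else 0)
      = -(2:ℝ)^F.card / 2 * (if F ⊆ G then 1 else 0) := by
  have ind : ∀ m : ℕ, (if Odd m then (1:ℝ) else 0) = (1 - (-1)^m)/2 := by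
    intro m
    rcases Nat.even_or_odd m with he | ho
    · rw [he.neg_one_pow, if_neg (by simpa using (Nat.not_odd_iff_even.mpr he))]
      norm_num
    · rw [ho.neg_one_pow, if_pos ho]; norm_num
  have hA : ∑ S ∈ F.powerset, ((-1:ℝ))^S.card = 0 := by
    have := Finset.sum_powerset_neg_one_pow_card_of_nonempty hF
    exact_mod_cast congrArg (fun z : ℤ => (z : ℝ)) this
  have hrw : ∀ S ∈ F.powerset, ((-1:ℝ))^S.card * (if Odd ((G ∩ S).card) then (1:ℝ) else 0)
      = (((-1:ℝ))^S.card - ((-1:ℝ))^S.card * (-1)^((G ∩ S).card)) / 2 := by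
    intro S _
    rw [ind]; ring
  rw [Finset.sum_congr rfl hrw, ← Finset.sum_div, Finset.sum_sub_distrib, hA, gcut_sumB]
  by_cases hFG : F ⊆ G
  · rw [if_pos hFG, if_pos hFG]; ring
  · rw [if_neg hFG, if_neg hFG]; ring

lemma gcut_wvec_mem {n : ℕ} (Δ : Finset (Finset (Fin n))) (F : Finset (Fin n))
    (hF : F.Nonempty) :
    (fun G : FaceIdx Δ => if F ⊆ G.val then (1:ℝ) else 0)
      ∈ Submodule.span ℝ (Set.range (dvec Δ)) := by
  set w : FaceIdx Δ → ℝ := fun G => if F ⊆ G.val then (1:ℝ) else 0 with hw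
  have hsum : ∑ S ∈ F.powerset, ((-1:ℝ))^S.card • dvec Δ S = (-(2:ℝ)^F.card / 2) • w := by
    funext G
    simp only [Finset.sum_apply, Pi.smul_apply, smul_eq_mul, dvec, hw]
    exact gcut_L1 F G.val hF
  have hmem : ∑ S ∈ F.powerset, ((-1:ℝ))^S.card • dvec Δ S
      ∈ Submodule.span ℝ (Set.range (dvec Δ)) :=
    Submodule.sum_mem _ fun S _ =>
      Submodule.smul_mem _ _ (Submodule.subset_span ⟨S, rfl⟩)
  rw [hsum] at hmem
  have hc : (-(2:ℝ)^F.card / 2) ≠ 0 := by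
    have : (2:ℝ)^F.card ≠ 0 := pow_ne_zero _ (by norm_num)
    intro h; apply this; linarith [h]
  have := Submodule.smul_mem (Submodule.span ℝ (Set.range (dvec Δ)))
    (-(2:ℝ)^F.card / 2)⁻¹ hmem
  rwa [smul_smul, inv_mul_cancel₀ hc, one_smul] at this

lemma gcut_single_mem {n : ℕ} (Δ : Finset (Finset (Fin n))) (F : FaceIdx Δ) :
    Pi.single F (1:ℝ) ∈ Submodule.span ℝ (Set.range (dvec Δ)) := by
  classical
  have key : ∀ k, ∀ F : FaceIdx Δ, n - F.val.card < k →
      Pi.single F (1:ℝ) ∈ Submodule.span ℝ (Set.range (dvec Δ)) := by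
    intro k
    induction k with
    | zero => intro F h; omega
    | succ k ih =>
      intro F hk
      have hw := gcut_wvec_mem Δ F.val F.prop.2
      have hident : (fun G : FaceIdx Δ => if F.val ⊆ G.val then (1:ℝ) else 0)
          = Pi.single F 1 + ∑ G ∈ Finset.univ.filter (fun G : FaceIdx Δ => F.val ⊂ G.val),
              Pi.single G (1:ℝ) := by
        funext H
        simp only [Pi.add_apply, Finset.sum_apply]
        have h2 : ∑ G ∈ Finset.univ.filter (fun G : FaceIdx Δ => F.val ⊂ G.val),
            Pi.single G (1:ℝ) H = if F.val ⊂ H.val then 1 else 0 := by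
          simp only [Pi.single_apply]
          rw [Finset.sum_ite_eq (Finset.univ.filter (fun G : FaceIdx Δ => F.val ⊂ G.val)) H
            (fun _ => (1:ℝ))]
          simp [Finset.mem_filter]
        rw [h2, Pi.single_apply]
        by_cases hHF : H = F
        · subst hHF
          rw [if_pos (subset_refl _), if_pos rfl,
            if_neg (fun h => (Finset.ssubset_iff_subset_ne.mp h).2 rfl)]
          norm_num
        · have hne : F.val ≠ H.val := fun h => hHF (Subtype.ext h.symm)
          rw [if_neg hHF, zero_add]
          by_cases hsub : F.val ⊆ H.val
          · rw [if_pos hsub, if_pos (Finset.ssubset_iff_subset_ne.mpr ⟨hsub, hne⟩)]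
          · rw [if_neg hsub, if_neg (fun h => hsub h.subset)]
      have hcardn : ∀ G : FaceIdx Δ, G.val.card ≤ n := fun G => by
        simpa using Finset.card_le_univ G.val
      have hsum_mem : ∑ G ∈ Finset.univ.filter (fun G : FaceIdx Δ => F.val ⊂ G.val),
          Pi.single G (1:ℝ) ∈ Submodule.span ℝ (Set.range (dvec Δ)) := by
        refine Submodule.sum_mem _ fun G hG => ih G ?_
        have hlt : F.val.card < G.val.card :=
          Finset.card_lt_card (Finset.mem_filter.mp hG).2
        have := hcardn G
        omega
      have := Submodule.sub_mem _ hw hsum_mem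
      rw [hident, add_sub_cancel_right] at this
      exact this
  exact key (n + 1) F (by omega)

lemma gcut_span_top {n : ℕ} (Δ : Finset (Finset (Fin n))) :
    Submodule.span ℝ (Set.range (dvec Δ)) = ⊤ := by
  classical
  rw [eq_top_iff, ← (Pi.basisFun ℝ (FaceIdx Δ)).span_eq]
  refine Submodule.span_le.mpr ?_
  rintro _ ⟨F, rfl⟩
  have : (Pi.basisFun ℝ (FaceIdx Δ)) F = Pi.single F (1:ℝ) := by
    ext G
    simp [Pi.basisFun_apply, Pi.single_apply, Function.update_apply]
  rw [this]
  exact gcut_single_mem Δ F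

/-- `GCut(Δ)` is full-dimensional: the affine span of the points `d^S`
is all of `ℝ^Δ̄`; consequently the dimension of `GCut(Δ)` (the rank of the direction of
its affine span) equals the number of nonempty faces of `Δ`. -/
theorem stmt_2 {n : ℕ} (Δ : Finset (Finset (Fin n)))
    (hΔ : ∀ F ∈ Δ, ∀ G, G ⊆ F → G ∈ Δ) :
    affineSpan ℝ (Set.range (dvec Δ)) = ⊤ ∧
    Module.finrank ℝ (vectorSpan ℝ (convexHull ℝ (Set.range (dvec Δ)))) =
      Fintype.card (FaceIdx Δ) := by
  classical
  have h0 : dvec Δ ∅ = 0 := by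
    funext G
    simp [dvec]
  have h0mem : (0 : FaceIdx Δ → ℝ) ∈ Set.range (dvec Δ) := ⟨∅, h0⟩
  have hne : (Set.range (dvec Δ)).Nonempty := ⟨_, h0mem⟩
  have hvs : vectorSpan ℝ (Set.range (dvec Δ)) = ⊤ := by
    rw [eq_top_iff, ← gcut_span_top Δ]
    refine Submodule.span_le.mpr fun v hv => ?_
    have := vsub_mem_vectorSpan ℝ hv h0mem
    simpa using this
  have haff : affineSpan ℝ (Set.range (dvec Δ)) = ⊤ :=
    (AffineSubspace.affineSpan_eq_top_iff_vectorSpan_eq_top_of_nonempty ℝ _ _ hne).mpr hvs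
  refine ⟨haff, ?_⟩
  rw [← direction_affineSpan, affineSpan_convexHull, haff, AffineSubspace.direction_top,
    finrank_top]
  exact Module.finrank_fintype_fun_eq_card ℝ
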